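/- arXiv:1110.1058 — 2 statements merged into one kernel-verified Lean document; each statement's English description precedes it below -/
import Mathlib

section
/- Let T > 0 and a > 0. Let s ∈ C¹([0,T]) with s > 0, set D_T = {(x,t) : 0 < x < s(t), 0 < t ≤ T}, and let v ∈ C²(D_T) ∩ C¹(D̄_T) satisfy ∂_t v = ∂_{xx} v + a ∂_x v in D_T, the flux boundary condition (∂_x v + a v)(0,t) = −a for 0 < t ≤ T, and v(s(t),t) = 0 for 0 < t ≤ T. If v(·,0) ≥ 0 on [0, s(0)], then v ≥ 0 everywhere on D̄_T. -/
open Set Filter Topology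

private lemma deriv_nonneg_of_min_right {f : ℝ → ℝ} {x δ : ℝ} (hδ : 0 < δ)
    (hf : DifferentiableAt ℝ f x) (hmin : ∀ y ∈ Set.Ico x (x + δ), f x ≤ f y) :
    0 ≤ deriv f x := by
  have hd := hf.hasDerivAt
  rw [hasDerivAt_iff_tendsto_slope] at hd
  have hle : 𝓝[>] x ≤ 𝓝[≠] x := nhdsWithin_mono _ (fun y hy => ne_of_gt hy)
  refine ge_of_tendsto (hd.mono_left hle) ?_
  filter_upwards [Ioo_mem_nhdsGT_of_mem (by constructor <;> linarith : x ∈ Set.Ico x (x + δ))] with y hy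
  have h1 : f x ≤ f y := hmin y ⟨hy.1.le, hy.2⟩
  have h2 : 0 < y - x := by linarith [hy.1]
  rw [slope_def_field]
  apply div_nonneg <;> linarith
  
private lemma deriv_nonpos_of_min_left {f : ℝ → ℝ} {x δ : ℝ} (hδ : 0 < δ)
    (hf : DifferentiableAt ℝ f x) (hmin : ∀ y ∈ Set.Ioc (x - δ) x, f x ≤ f y) :
    deriv f x ≤ 0 := by
  have hd := hf.hasDerivAt
  rw [hasDerivAt_iff_tendsto_slope] at hd
  have hle : 𝓝[<] x ≤ 𝓝[≠] x := nhdsWithin_mono _ (fun y hy => ne_of_lt hy)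
  refine le_of_tendsto (hd.mono_left hle) ?_
  filter_upwards [Ioo_mem_nhdsLT_of_mem (by constructor <;> linarith : x ∈ Set.Ioc (x - δ) x)] with y hy
  have h1 : f x ≤ f y := hmin y ⟨hy.1, hy.2.le⟩
  have h2 : y - x < 0 := by linarith [hy.2]
  rw [slope_def_field]
  apply div_nonpos_of_nonneg_of_nonpos <;> linarith

private lemma second_deriv_nonneg_of_min {f : ℝ → ℝ} {x δ : ℝ} (hδ : 0 < δ)
    (hfd : ∀ y ∈ Set.Ioo (x - δ) (x + δ), DifferentiableAt ℝ f y)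
    (hf2 : DifferentiableAt ℝ (deriv f) x)
    (hmin : ∀ y ∈ Set.Ioo (x - δ) (x + δ), f x ≤ f y) :
    0 ≤ deriv (deriv f) x := by
  have hxmem : Set.Ioo (x - δ) (x + δ) ∈ 𝓝 x := Ioo_mem_nhds (by linarith) (by linarith)
  have hlm : IsLocalMin f x := by
    filter_upwards [hxmem] with y hy using hmin y hy
  have hderiv0 : deriv f x = 0 := hlm.deriv_eq_zero
  by_contra hc
  push_neg at hc
  set c := deriv (deriv f) x with hcdef
  have hc2 : c < c / 2 := by linarith
  have hd2 := hf2.hasDerivAt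
  rw [hasDerivAt_iff_tendsto_slope] at hd2
  have hle : 𝓝[>] x ≤ 𝓝[≠] x := nhdsWithin_mono _ (fun y hy => ne_of_gt hy)
  have hev : ∀ᶠ y in 𝓝[>] x, slope (deriv f) x y < c / 2 :=
    (hd2.mono_left hle).eventually_lt_const hc2
  obtain ⟨u, hu, hsub⟩ := mem_nhdsGT_iff_exists_Ioo_subset.mp hev
  set b := min u (x + δ) with hbdef
  have hxb : x < b := lt_min hu (by linarith)
  set y₀ := (x + b) / 2 with hy₀def
  have hy₀1 : x < y₀ := by simp only [hy₀def]; linarith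
  have hy₀2 : y₀ < b := by simp only [hy₀def]; linarith
  have hy₀δ : y₀ < x + δ := lt_of_lt_of_le hy₀2 (min_le_right _ _)
  have hcont : ContinuousOn f (Set.Icc x y₀) := by
    intro y hy
    exact (hfd y ⟨by linarith [hy.1], by linarith [hy.2]⟩).continuousAt.continuousWithinAt
  have hdiff : DifferentiableOn ℝ f (Set.Ioo x y₀) := by
    intro y hy
    exact (hfd y ⟨by linarith [hy.1], by linarith [hy.2]⟩).differentiableWithinAt
  obtain ⟨ξ, hξ, hξeq⟩ := exists_deriv_eq_slope f hy₀1 hcont hdiff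
  have hξb : ξ < b := lt_trans hξ.2 hy₀2
  have hslope : slope (deriv f) x ξ < c / 2 :=
    hsub ⟨hξ.1, lt_of_lt_of_le hξb (min_le_left _ _)⟩
  rw [slope_def_field, hderiv0] at hslope
  have hξx : 0 < ξ - x := by linarith [hξ.1]
  have hderivξ : deriv f ξ < 0 := by
    rw [div_lt_iff₀ hξx] at hslope
    nlinarith
  have hy₀x : 0 < y₀ - x := by linarith
  have hfy₀ : f y₀ - f x < 0 := by
    have h5 : (f y₀ - f x) / (y₀ - x) < 0 := hξeq ▸ hderivξ
    by_contra hge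
    push_neg at hge
    have : 0 ≤ (f y₀ - f x) / (y₀ - x) := div_nonneg (by linarith) hy₀x.le
    linarith
  have := hmin y₀ ⟨by linarith, hy₀δ⟩
  linarith

private noncomputable def Wfn (a ε : ℝ) (v : ℝ → ℝ → ℝ) (p : ℝ × ℝ) : ℝ :=
  a * Real.exp (a * p.1) * v p.1 p.2 + ε * p.2

private lemma Wfn_apply (a ε : ℝ) (v : ℝ → ℝ → ℝ) (p : ℝ × ℝ) :
    Wfn a ε v p = a * Real.exp (a * p.1) * v p.1 p.2 + ε * p.2 := rfl

set_option maxHeartbeats 2000000 in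
/-- Nonnegativity of classical solutions of ∂ₜv = ∂ₓₓv + a∂ₓv on the
non-cylindrical domain D_T = {(x,t) : 0 < x < s(t), 0 < t ≤ T}, with flux
condition (∂ₓv + av)(0,t) = −a and v(s(t),t) = 0, assuming v(·,0) ≥ 0. -/
theorem stmt2
    (T a : ℝ) (hT : 0 < T) (ha : 0 < a)
    (s : ℝ → ℝ) (hsC1 : ContDiffOn ℝ 1 s (Set.Icc 0 T))
    (hspos : ∀ t ∈ Set.Icc (0:ℝ) T, 0 < s t)
    (DT : Set (ℝ × ℝ))
    (hDT : DT = {p : ℝ × ℝ | 0 < p.1 ∧ p.1 < s p.2 ∧ 0 < p.2 ∧ p.2 ≤ T})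
    (v : ℝ → ℝ → ℝ)
    (hvC2 : ContDiffOn ℝ 2 (fun p : ℝ × ℝ => v p.1 p.2) DT)
    (hvC1 : ContDiffOn ℝ 1 (fun p : ℝ × ℝ => v p.1 p.2) (closure DT))
    (hpde : ∀ p ∈ DT, deriv (fun τ => v p.1 τ) p.2
      = deriv (deriv (fun ξ => v ξ p.2)) p.1 + a * deriv (fun ξ => v ξ p.2) p.1)
    (hflux : ∀ t ∈ Set.Ioc (0:ℝ) T, deriv (fun ξ => v ξ t) 0 + a * v 0 t = -a)
    (hdir : ∀ t ∈ Set.Ioc (0:ℝ) T, v (s t) t = 0)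
    (hinit : ∀ x ∈ Set.Icc 0 (s 0), 0 ≤ v x 0) :
    ∀ p ∈ closure DT, 0 ≤ v p.1 p.2 := by
  subst hDT
  set D : Set (ℝ × ℝ) := {p : ℝ × ℝ | 0 < p.1 ∧ p.1 < s p.2 ∧ 0 < p.2 ∧ p.2 ≤ T} with hD
  set K : Set (ℝ × ℝ) := closure D with hK
  have hscont : ContinuousOn s (Set.Icc 0 T) := hsC1.continuousOn
  have hvcont : ContinuousOn (fun p : ℝ × ℝ => v p.1 p.2) K := hvC1.continuousOn
  -- closure is contained in the closed version S
  have hKS : ∀ p ∈ K, 0 ≤ p.1 ∧ p.1 ≤ s p.2 ∧ 0 ≤ p.2 ∧ p.2 ≤ T := by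
    have hS : IsClosed ((Set.Ici (0:ℝ) ×ˢ Set.Icc (0:ℝ) T) ∩
        (fun p : ℝ × ℝ => p.1 - s p.2) ⁻¹' Set.Iic 0) := by
      apply ContinuousOn.preimage_isClosed_of_isClosed
      · exact continuousOn_fst.sub (hscont.comp continuousOn_snd (fun p hp => hp.2))
      · exact isClosed_Ici.prod isClosed_Icc
      · exact isClosed_Iic
    have hDsub : D ⊆ (Set.Ici (0:ℝ) ×ˢ Set.Icc (0:ℝ) T) ∩
        (fun p : ℝ × ℝ => p.1 - s p.2) ⁻¹' Set.Iic 0 := by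
      intro p hp
      obtain ⟨h1, h2, h3, h4⟩ := hp
      exact ⟨⟨h1.le, h3.le, h4⟩, by simpa using h2.le⟩
    intro p hp
    have h := closure_minimal hDsub hS hp
    obtain ⟨⟨h1, h2, h3⟩, h4⟩ := h
    have h4' : p.1 - s p.2 ≤ 0 := h4
    exact ⟨h1, by linarith, h2, h3⟩
  -- compactness of K
  obtain ⟨M, hM⟩ : ∃ M, ∀ t ∈ Set.Icc (0:ℝ) T, s t ≤ M := by
    obtain ⟨t₀, ht₀, h⟩ := isCompact_Icc.exists_isMaxOn (nonempty_Icc.mpr hT.le) hscont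
    exact ⟨s t₀, fun t ht => h ht⟩
  have hKcomp : IsCompact K := by
    apply IsCompact.of_isClosed_subset (isCompact_Icc (a := ((0:ℝ), (0:ℝ))) (b := (M, T)))
      isClosed_closure
    intro p hp
    obtain ⟨h1, h2, h3, h4⟩ := hKS p hp
    rw [Set.mem_Icc]
    exact ⟨⟨h1, h3⟩, ⟨h2.trans (hM p.2 ⟨h3, h4⟩), h4⟩⟩
  -- left edge belongs to K
  have hmemK_left : ∀ τ : ℝ, 0 < τ → τ ≤ T → ((0:ℝ), τ) ∈ K := by
    intro τ h0 hτT
    have hsτ : 0 < s τ := hspos τ ⟨h0.le, hτT⟩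
    have hseg : Set.Ioo (0:ℝ) (s τ) ×ˢ ({τ} : Set ℝ) ⊆ D := by
      rintro ⟨x, t⟩ ⟨hx, ht⟩
      simp only [Set.mem_singleton_iff] at ht
      subst ht
      exact ⟨hx.1, hx.2, h0, hτT⟩
    have h1 : ((0:ℝ), τ) ∈ closure (Set.Ioo (0:ℝ) (s τ) ×ˢ ({τ} : Set ℝ)) := by
      rw [closure_prod_eq, closure_Ioo (ne_of_lt hsτ), closure_singleton]
      exact ⟨⟨le_refl 0, hsτ.le⟩, rfl⟩
    exact closure_mono hseg h1
  -- the key quantitative estimate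
  have key : ∀ T', 0 < T' → T' < T → ∀ ε, 0 < ε → ε < a / (2 * T) →
      ∀ p ∈ K, p.2 ≤ T' → 0 ≤ a * Real.exp (a * p.1) * v p.1 p.2 + ε * p.2 := by
    intro T' hT'0 hT'T ε hε0 hεa
    by_contra hcon
    push_neg at hcon
    obtain ⟨q, hqK, hqT', hqW⟩ := hcon
    have hWcont : ContinuousOn (Wfn a ε v) K := by
      apply ContinuousOn.add
      · exact (continuous_const.mul
          (Real.continuous_exp.comp (continuous_const.mul continuous_fst))).continuousOn.mul hvcont
      · exact (continuous_const.mul continuous_snd).continuousOn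
    have hqW' : Wfn a ε v q < 0 := by rw [Wfn_apply]; exact hqW
    have hmul : ε * (2 * T) < a := (lt_div_iff₀ (by positivity : (0:ℝ) < 2 * T)).mp hεa
    have hrneg : -a + ε * T' < 0 := by
      nlinarith [mul_lt_mul_of_pos_left hT'T hε0, mul_pos hε0 hT'0]
    obtain ⟨c, hcneg, hqc, hrc⟩ : ∃ c : ℝ, c < 0 ∧ Wfn a ε v q < c ∧ -a + ε * T' < c := by
      refine ⟨max (Wfn a ε v q) (-a + ε * T') / 2, ?_, ?_, ?_⟩
      · have := max_lt hqW' hrneg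
        linarith
      · rcases max_cases (Wfn a ε v q) (-a + ε * T') with ⟨h, h2⟩ | ⟨h, h2⟩ <;> rw [h] <;>
          linarith
      · rcases max_cases (Wfn a ε v q) (-a + ε * T') with ⟨h, h2⟩ | ⟨h, h2⟩ <;> rw [h] <;>
          linarith
    have hclosedT' : IsClosed {p : ℝ × ℝ | p.2 ≤ T'} := isClosed_le continuous_snd continuous_const
    have hK'closed : IsClosed (K ∩ {p : ℝ × ℝ | p.2 ≤ T'}) := isClosed_closure.inter hclosedT'
    have hK'comp : IsCompact (K ∩ {p : ℝ × ℝ | p.2 ≤ T'}) := hKcomp.inter_right hclosedT'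
    have hZclosed : IsClosed ((K ∩ {p : ℝ × ℝ | p.2 ≤ T'}) ∩ Wfn a ε v ⁻¹' Set.Iic c) :=
      ContinuousOn.preimage_isClosed_of_isClosed
        (hWcont.mono Set.inter_subset_left) hK'closed isClosed_Iic
    have hZcomp : IsCompact ((K ∩ {p : ℝ × ℝ | p.2 ≤ T'}) ∩ Wfn a ε v ⁻¹' Set.Iic c) :=
      hK'comp.of_isClosed_subset hZclosed Set.inter_subset_left
    have hqZ : q ∈ (K ∩ {p : ℝ × ℝ | p.2 ≤ T'}) ∩ Wfn a ε v ⁻¹' Set.Iic c :=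
      ⟨⟨hqK, hqT'⟩, hqc.le⟩
    obtain ⟨p', hp'Z, hp'min⟩ := hZcomp.exists_isMinOn ⟨q, hqZ⟩ continuous_snd.continuousOn
    rw [isMinOn_iff] at hp'min
    obtain ⟨⟨hp'K, hp'T'⟩, hp'W'⟩ := hp'Z
    have hp'le : p'.2 ≤ T' := hp'T'
    have hp'W : Wfn a ε v p' ≤ c := hp'W'
    obtain ⟨hx0, hxs, ht0', htT⟩ := hKS p' hp'K
    -- the minimal time is positive
    have ht0 : 0 < p'.2 := by
      rcases eq_or_lt_of_le ht0' with h | h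
      · exfalso
        have h2 : p'.2 = 0 := h.symm
        have hv0 : 0 ≤ v p'.1 p'.2 := by
          have hxs0 : p'.1 ≤ s 0 := by rw [h2] at hxs; exact hxs
          rw [h2]
          exact hinit p'.1 ⟨hx0, hxs0⟩
        have hW0 : 0 ≤ Wfn a ε v p' := by
          rw [Wfn_apply]
          have h1 : 0 ≤ a * Real.exp (a * p'.1) * v p'.1 p'.2 :=
            mul_nonneg (mul_nonneg ha.le (Real.exp_pos _).le) hv0
          have h3 : 0 ≤ ε * p'.2 := by rw [h2]; simp
          linarith
        linarith
      · exact h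
    -- minimum property over all earlier times
    have hlow : ∀ z ∈ K, z.2 ≤ p'.2 → c ≤ Wfn a ε v z := by
      intro z hzK hzt
      by_contra hzc
      push_neg at hzc
      rcases lt_or_eq_of_le hzt with hlt | heq
      · have hzZ : z ∈ (K ∩ {p : ℝ × ℝ | p.2 ≤ T'}) ∩ Wfn a ε v ⁻¹' Set.Iic c :=
          ⟨⟨hzK, hlt.le.trans hp'le⟩, hzc.le⟩
        exact absurd (hp'min z hzZ) (not_le.mpr hlt)
      · obtain ⟨hz1, hz2, hz3, hz4⟩ := hKS z hzK
        have hz20 : 0 < z.2 := heq ▸ ht0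
        rcases eq_or_lt_of_le hz2 with hzs | hzs
        · have hvz : v z.1 z.2 = 0 := by rw [hzs]; exact hdir z.2 ⟨hz20, hz4⟩
          have hWz : Wfn a ε v z = ε * z.2 := by rw [Wfn_apply, hvz]; ring
          have h5 : 0 ≤ Wfn a ε v z := by rw [hWz]; positivity
          linarith
        · -- approximate from earlier times
          have hFne : (𝓝[Set.Ioo (0:ℝ) z.2] z.2).NeBot := by
            rw [← mem_closure_iff_nhdsWithin_neBot, closure_Ioo (ne_of_lt hz20)]
            exact ⟨hz20.le, le_rfl⟩
          have hsubI : Set.Ioo (0:ℝ) z.2 ⊆ Set.Icc 0 T := fun τ hτ => ⟨hτ.1.le, hτ.2.le.trans hz4⟩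
          have hFle : 𝓝[Set.Ioo (0:ℝ) z.2] z.2 ≤ 𝓝[Set.Icc (0:ℝ) T] z.2 :=
            nhdsWithin_mono _ hsubI
          have hsc : ContinuousWithinAt s (Set.Icc 0 T) z.2 := hscont z.2 ⟨hz3, hz4⟩
          have hev1 : ∀ᶠ τ in 𝓝[Set.Ioo (0:ℝ) z.2] z.2, z.1 < s τ :=
            (hsc.mono_left hFle).eventually (eventually_gt_nhds hzs)
          have hev2 : ∀ᶠ τ in 𝓝[Set.Ioo (0:ℝ) z.2] z.2, τ ∈ Set.Ioo (0:ℝ) z.2 :=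
            eventually_mem_nhdsWithin
          have hev3 : ∀ᶠ τ in 𝓝[Set.Ioo (0:ℝ) z.2] z.2, (z.1, τ) ∈ K := by
            filter_upwards [hev1, hev2] with τ h1 h2
            rcases eq_or_lt_of_le hz1 with h0 | h0
            · rw [← h0]
              exact hmemK_left τ h2.1 (h2.2.le.trans hz4)
            · exact subset_closure ⟨h0, h1, h2.1, h2.2.le.trans hz4⟩
          have htend : Filter.Tendsto (fun τ => (z.1, τ)) (𝓝[Set.Ioo (0:ℝ) z.2] z.2) (𝓝[K] z) := by
            rw [tendsto_nhdsWithin_iff]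
            refine ⟨?_, hev3⟩
            have h1 : Filter.Tendsto (fun τ : ℝ => (z.1, τ)) (𝓝 z.2) (𝓝 (z.1, z.2)) :=
              (continuous_const.prodMk continuous_id).tendsto z.2
            have h2 : (z.1, z.2) = z := rfl
            rw [h2] at h1
            exact h1.mono_left nhdsWithin_le_nhds
          have hcwa : Filter.Tendsto (Wfn a ε v) (𝓝[K] z) (𝓝 (Wfn a ε v z)) := hWcont z hzK
          have hWz : Filter.Tendsto (fun τ => Wfn a ε v (z.1, τ)) (𝓝[Set.Ioo (0:ℝ) z.2] z.2)
              (𝓝 (Wfn a ε v z)) := hcwa.comp htend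
          have hev4 : ∀ᶠ τ in 𝓝[Set.Ioo (0:ℝ) z.2] z.2, Wfn a ε v (z.1, τ) < c :=
            hWz.eventually_lt_const hzc
          obtain ⟨τ, h2, h3, h4⟩ := (hev2.and (hev3.and hev4)).exists
          have hτZ : (z.1, τ) ∈ (K ∩ {p : ℝ × ℝ | p.2 ≤ T'}) ∩ Wfn a ε v ⁻¹' Set.Iic c := by
            refine ⟨⟨h3, ?_⟩, h4.le⟩
            show τ ≤ T'
            have hτp : τ < p'.2 := heq ▸ h2.2
            linarith
          have h5 := hp'min _ hτZ
          have h6 : p'.2 ≤ τ := h5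
          have hτp : τ < p'.2 := heq ▸ h2.2
          linarith
    have hWp' : Wfn a ε v p' = c := le_antisymm hp'W (hlow p' hp'K le_rfl)
    have hst' : 0 < s p'.2 := hspos p'.2 ⟨ht0.le, htT⟩
    -- case analysis on the minimal point
    rcases eq_or_lt_of_le hxs with hxeq | hxlt
    · -- right boundary
      have hv : v p'.1 p'.2 = 0 := by rw [hxeq]; exact hdir p'.2 ⟨ht0, htT⟩
      have hWeq : Wfn a ε v p' = ε * p'.2 := by rw [Wfn_apply, hv]; ring
      have h5 : 0 ≤ Wfn a ε v p' := by rw [hWeq]; positivity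
      linarith
    rcases eq_or_lt_of_le hx0 with hxeq0 | hx0'
    · -- left boundary
      have hx1 : p'.1 = 0 := hxeq0.symm
      by_cases hdiff : DifferentiableAt ℝ (fun ξ => v ξ p'.2) 0
      · have hmin : ∀ y ∈ Set.Ico (0:ℝ) (0 + s p'.2),
            (fun ξ => a * Real.exp (a * ξ) * v ξ p'.2) 0 ≤
            (fun ξ => a * Real.exp (a * ξ) * v ξ p'.2) y := by
          intro y hy
          dsimp only
          rcases eq_or_lt_of_le hy.1 with h0 | h0
          · rw [← h0]
          · have hyK : (y, p'.2) ∈ K := subset_closure ⟨h0, by simpa using hy.2, ht0, htT⟩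
            have hyW := hlow (y, p'.2) hyK le_rfl
            rw [Wfn_apply] at hyW
            rw [Wfn_apply, hx1] at hWp'
            simp only at hyW
            linarith
        have hexp : HasDerivAt (fun ξ : ℝ => Real.exp (a * ξ)) (Real.exp (a * 0) * a) 0 := by
          have h1 : HasDerivAt (fun ξ : ℝ => a * ξ) a 0 := by
            simpa using (hasDerivAt_id (0:ℝ)).const_mul a
          exact (Real.hasDerivAt_exp (a * 0)).comp 0 h1
        have hdg : HasDerivAt (fun ξ => a * Real.exp (a * ξ) * v ξ p'.2)
            (a * (Real.exp (a * 0) * a) * v 0 p'.2 +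
              a * Real.exp (a * 0) * deriv (fun ξ => v ξ p'.2) 0) 0 :=
          (hexp.const_mul a).mul hdiff.hasDerivAt
        have hge0 : 0 ≤ deriv (fun ξ => a * Real.exp (a * ξ) * v ξ p'.2) 0 :=
          deriv_nonneg_of_min_right hst' hdg.differentiableAt hmin
        rw [hdg.deriv] at hge0
        have hfl := hflux p'.2 ⟨ht0, htT⟩
        have hBv : deriv (fun ξ => v ξ p'.2) 0 = -a - a * v 0 p'.2 := by linarith
        rw [hBv] at hge0
        simp only [mul_zero, Real.exp_zero, mul_one] at hge0
        nlinarith [mul_pos ha ha]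
      · have hd0 : deriv (fun ξ => v ξ p'.2) 0 = 0 := deriv_zero_of_not_differentiableAt hdiff
        have hfl := hflux p'.2 ⟨ht0, htT⟩
        rw [hd0, zero_add] at hfl
        have hv0 : v 0 p'.2 = -1 := by
          have h2 : a * v 0 p'.2 = a * (-1) := by linarith
          exact mul_left_cancel₀ (ne_of_gt ha) h2
        have hWeq : Wfn a ε v p' = -a + ε * p'.2 := by
          rw [Wfn_apply, hx1, hv0]
          simp only [mul_zero, Real.exp_zero, mul_one]
          ring
        have hcr : c ≤ -a + ε * T' := by
          rw [← hWp', hWeq]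
          have h7 : ε * p'.2 ≤ ε * T' := by nlinarith
          linarith
        linarith
    · -- interior point
      have ht'T : p'.2 < T := lt_of_le_of_lt hp'le hT'T
      have hsc : ContinuousWithinAt s (Set.Icc 0 T) p'.2 := hscont p'.2 ⟨ht0.le, htT⟩
      have hmid : (p'.1 + s p'.2) / 2 < s p'.2 := by linarith
      have hevs : ∀ᶠ τ in 𝓝[Set.Icc (0:ℝ) T] p'.2, (p'.1 + s p'.2) / 2 < s τ :=
        hsc.eventually (eventually_gt_nhds hmid)
      obtain ⟨δ, hδ0, hδ⟩ := Metric.mem_nhdsWithin_iff.mp hevs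
      obtain ⟨ρ₁, hρ₁0, hρ₁a, hρ₁b⟩ :
          ∃ ρ₁ : ℝ, 0 < ρ₁ ∧ ρ₁ ≤ p'.1 ∧ ρ₁ ≤ (s p'.2 - p'.1) / 2 :=
        ⟨min p'.1 ((s p'.2 - p'.1) / 2), lt_min hx0' (by linarith), min_le_left _ _,
          min_le_right _ _⟩
      obtain ⟨ρ₂, hρ₂0, hρ₂a, hρ₂b, hρ₂c⟩ :
          ∃ ρ₂ : ℝ, 0 < ρ₂ ∧ ρ₂ ≤ δ ∧ ρ₂ ≤ p'.2 ∧ ρ₂ ≤ T - p'.2 :=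
        ⟨min δ (min p'.2 (T - p'.2)), lt_min hδ0 (lt_min ht0 (by linarith)), min_le_left _ _,
          (min_le_right _ _).trans (min_le_left _ _), (min_le_right _ _).trans (min_le_right _ _)⟩
      have hUD : ∀ ξ τ : ℝ, ξ ∈ Set.Ioo (p'.1 - ρ₁) (p'.1 + ρ₁) →
          τ ∈ Set.Ioo (p'.2 - ρ₂) (p'.2 + ρ₂) → (ξ, τ) ∈ D := by
        intro ξ τ hξ hτ
        have h1 : 0 < ξ := by linarith [hξ.1]
        have h2 : 0 < τ := by linarith [hτ.1]
        have h3 : τ < T := by linarith [hτ.2]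
        have h4 : dist τ p'.2 < δ := by
          rw [Real.dist_eq, abs_lt]
          constructor <;> linarith [hτ.1, hτ.2]
        have h5 : (p'.1 + s p'.2) / 2 < s τ := hδ ⟨Metric.mem_ball.mpr h4, ⟨h2.le, h3.le⟩⟩
        have h6 : ξ < s τ := by linarith [hξ.2]
        exact ⟨h1, h6, h2, h3.le⟩
      have hDmem : D ∈ 𝓝 p' := by
        have hU : Set.Ioo (p'.1 - ρ₁) (p'.1 + ρ₁) ×ˢ Set.Ioo (p'.2 - ρ₂) (p'.2 + ρ₂) ∈ 𝓝 p' :=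
          prod_mem_nhds (Ioo_mem_nhds (by linarith) (by linarith))
            (Ioo_mem_nhds (by linarith) (by linarith))
        refine Filter.mem_of_superset hU ?_
        rintro ⟨ξ, τ⟩ ⟨h1, h2⟩
        exact hUD ξ τ h1 h2
      have hF2 : ContDiffAt ℝ 2 (fun p : ℝ × ℝ => v p.1 p.2) p' := hvC2.contDiffAt hDmem
      have hu : ContDiffAt ℝ 2 (fun ξ => v ξ p'.2) p'.1 := by
        have hcd : ContDiffAt ℝ 2 (fun ξ : ℝ => (ξ, p'.2)) p'.1 :=
          (contDiff_id.prodMk contDiff_const).contDiffAt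
        exact hF2.comp p'.1 hcd
      have hτc : ContDiffAt ℝ 1 (fun τ => v p'.1 τ) p'.2 := by
        have hcd : ContDiffAt ℝ 1 (fun τ : ℝ => (p'.1, τ)) p'.2 :=
          (contDiff_const.prodMk contDiff_id).contDiffAt
        have := (hF2.of_le (by norm_num) : ContDiffAt ℝ 1 (fun p : ℝ × ℝ => v p.1 p.2) p').comp p'.2 hcd; exact this
      -- time direction
      have hvt : HasDerivAt (fun τ => v p'.1 τ) (deriv (fun τ => v p'.1 τ) p'.2) p'.2 :=
        (hτc.differentiableAt (by norm_num)).hasDerivAt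
      have hh : HasDerivAt (fun τ => a * Real.exp (a * p'.1) * v p'.1 τ + ε * τ)
          (a * Real.exp (a * p'.1) * deriv (fun τ => v p'.1 τ) p'.2 + ε * 1) p'.2 :=
        (hvt.const_mul (a * Real.exp (a * p'.1))).add ((hasDerivAt_id p'.2).const_mul ε)
      have hminh : ∀ y ∈ Set.Ioc (p'.2 - ρ₂) p'.2,
          (fun τ => a * Real.exp (a * p'.1) * v p'.1 τ + ε * τ) p'.2 ≤
          (fun τ => a * Real.exp (a * p'.1) * v p'.1 τ + ε * τ) y := by
        intro y hy
        dsimp only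
        rcases eq_or_lt_of_le hy.2 with he | hlt'
        · rw [he]
        · have hyD : (p'.1, y) ∈ D :=
            hUD p'.1 y ⟨by linarith, by linarith⟩ ⟨hy.1, by linarith [hy.2]⟩
          have hyW := hlow (p'.1, y) (subset_closure hyD) hy.2
          rw [Wfn_apply] at hyW
          rw [Wfn_apply] at hWp'
          simp only at hyW
          linarith
      have hht : deriv (fun τ => a * Real.exp (a * p'.1) * v p'.1 τ + ε * τ) p'.2 ≤ 0 :=
        deriv_nonpos_of_min_left hρ₂0 hh.differentiableAt hminh
      rw [hh.deriv] at hht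
      have hAneg : deriv (fun τ => v p'.1 τ) p'.2 < 0 := by
        nlinarith [mul_pos ha (Real.exp_pos (a * p'.1))]
      -- space direction
      have huev : ∀ᶠ y in 𝓝 p'.1, DifferentiableAt ℝ (fun ξ => v ξ p'.2) y := by
        filter_upwards [hu.eventually (by norm_num)] with y hy
        exact hy.differentiableAt (by norm_num)
      obtain ⟨δ₂, hδ₂0, hδ₂⟩ := Metric.eventually_nhds_iff.mp huev
      obtain ⟨δ₃, hδ₃0, hδ₃a, hδ₃b⟩ : ∃ δ₃ : ℝ, 0 < δ₃ ∧ δ₃ ≤ ρ₁ ∧ δ₃ ≤ δ₂ :=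
        ⟨min ρ₁ δ₂, lt_min hρ₁0 hδ₂0, min_le_left _ _, min_le_right _ _⟩
      have hexpd : ∀ y : ℝ,
          HasDerivAt (fun ξ : ℝ => Real.exp (a * ξ)) (Real.exp (a * y) * a) y := by
        intro y
        have h1 : HasDerivAt (fun ξ : ℝ => a * ξ) a y := by
          simpa using (hasDerivAt_id y).const_mul a
        exact (Real.hasDerivAt_exp (a * y)).comp y h1
      have hgd : ∀ y ∈ Set.Ioo (p'.1 - δ₃) (p'.1 + δ₃),
          DifferentiableAt ℝ (fun ξ => a * Real.exp (a * ξ) * v ξ p'.2) y := by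
        intro y hy
        have hud : DifferentiableAt ℝ (fun ξ => v ξ p'.2) y := by
          apply hδ₂
          rw [Real.dist_eq, abs_lt]
          constructor <;> linarith [hy.1, hy.2]
        exact (((hexpd y).const_mul a).mul hud.hasDerivAt).differentiableAt
      have hgmin : ∀ y ∈ Set.Ioo (p'.1 - δ₃) (p'.1 + δ₃),
          (fun ξ => a * Real.exp (a * ξ) * v ξ p'.2) p'.1 ≤
          (fun ξ => a * Real.exp (a * ξ) * v ξ p'.2) y := by
        intro y hy
        dsimp only
        have hyD : (y, p'.2) ∈ D := by
          apply hUD y p'.2 ⟨by linarith [hy.1], by linarith [hy.2]⟩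
          constructor <;> linarith
        have hyW := hlow (y, p'.2) (subset_closure hyD) le_rfl
        rw [Wfn_apply] at hyW
        rw [Wfn_apply] at hWp'
        simp only at hyW
        linarith
      have hgderiv : ∀ᶠ y in 𝓝 p'.1,
          deriv (fun ξ => a * Real.exp (a * ξ) * v ξ p'.2) y =
            a * Real.exp (a * y) * (a * v y p'.2 + deriv (fun ξ => v ξ p'.2) y) := by
        filter_upwards [huev] with y hy
        have hgy : HasDerivAt (fun ξ => a * Real.exp (a * ξ) * v ξ p'.2)
            (a * (Real.exp (a * y) * a) * v y p'.2 +
              a * Real.exp (a * y) * deriv (fun ξ => v ξ p'.2) y) y :=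
          ((hexpd y).const_mul a).mul hy.hasDerivAt
        rw [hgy.deriv]; ring
      have hu' : ContDiffAt ℝ 1 (deriv (fun ξ => v ξ p'.2)) p'.1 := by
        have h1 : ContDiffAt ℝ 1 (fderiv ℝ (fun ξ => v ξ p'.2)) p'.1 :=
          hu.fderiv_right (by norm_num)
        exact h1.clm_apply contDiffAt_const
      have hu'd : DifferentiableAt ℝ (deriv (fun ξ => v ξ p'.2)) p'.1 :=
        hu'.differentiableAt (by norm_num)
      have hud : DifferentiableAt ℝ (fun ξ => v ξ p'.2) p'.1 := hu.differentiableAt (by norm_num)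
      have hSd : HasDerivAt (fun y => a * v y p'.2 + deriv (fun ξ => v ξ p'.2) y)
          (a * deriv (fun ξ => v ξ p'.2) p'.1 + deriv (deriv (fun ξ => v ξ p'.2)) p'.1) p'.1 :=
        (hud.hasDerivAt.const_mul a).add hu'd.hasDerivAt
      have hGd : HasDerivAt
          (fun y => a * Real.exp (a * y) * (a * v y p'.2 + deriv (fun ξ => v ξ p'.2) y))
          (a * (Real.exp (a * p'.1) * a) *
              (a * v p'.1 p'.2 + deriv (fun ξ => v ξ p'.2) p'.1) +
            a * Real.exp (a * p'.1) *
              (a * deriv (fun ξ => v ξ p'.2) p'.1 + deriv (deriv (fun ξ => v ξ p'.2)) p'.1))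
          p'.1 :=
        ((hexpd p'.1).const_mul a).mul hSd
      have hdgdiff : DifferentiableAt ℝ (deriv (fun ξ => a * Real.exp (a * ξ) * v ξ p'.2)) p'.1 :=
        hGd.differentiableAt.congr_of_eventuallyEq hgderiv
      have h2nd : 0 ≤ deriv (deriv (fun ξ => a * Real.exp (a * ξ) * v ξ p'.2)) p'.1 :=
        second_deriv_nonneg_of_min hδ₃0 hgd hdgdiff hgmin
      have hdd : deriv (deriv (fun ξ => a * Real.exp (a * ξ) * v ξ p'.2)) p'.1 =
          a * (Real.exp (a * p'.1) * a) *
              (a * v p'.1 p'.2 + deriv (fun ξ => v ξ p'.2) p'.1) +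
            a * Real.exp (a * p'.1) *
              (a * deriv (fun ξ => v ξ p'.2) p'.1 + deriv (deriv (fun ξ => v ξ p'.2)) p'.1) := by
        rw [Filter.EventuallyEq.deriv_eq hgderiv, hGd.deriv]
      have hglm : IsLocalMin (fun ξ => a * Real.exp (a * ξ) * v ξ p'.2) p'.1 := by
        filter_upwards [Ioo_mem_nhds (by linarith : p'.1 - δ₃ < p'.1)
          (by linarith : p'.1 < p'.1 + δ₃)] with y hy
        exact hgmin y hy
      have hg0 : deriv (fun ξ => a * Real.exp (a * ξ) * v ξ p'.2) p'.1 = 0 := hglm.deriv_eq_zero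
      have hgx' : deriv (fun ξ => a * Real.exp (a * ξ) * v ξ p'.2) p'.1 =
          a * Real.exp (a * p'.1) * (a * v p'.1 p'.2 + deriv (fun ξ => v ξ p'.2) p'.1) :=
        hgderiv.self_of_nhds
      have hsum0 : a * v p'.1 p'.2 + deriv (fun ξ => v ξ p'.2) p'.1 = 0 := by
        rw [hg0] at hgx'
        have hne : a * Real.exp (a * p'.1) ≠ 0 := by positivity
        rcases mul_eq_zero.mp hgx'.symm with h | h
        · exact absurd h hne
        · exact h
      rw [hdd, hsum0, mul_zero, zero_add] at h2nd
      have hkey2 : 0 ≤ a * deriv (fun ξ => v ξ p'.2) p'.1 +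
          deriv (deriv (fun ξ => v ξ p'.2)) p'.1 := by
        nlinarith [mul_pos ha (Real.exp_pos (a * p'.1))]
      have hpde' := hpde p' ⟨hx0', hxlt, ht0, htT⟩
      linarith [hpde', hAneg, hkey2]
  -- conclusion from key
  have hD'cl : K ⊆ closure (D ∩ {p : ℝ × ℝ | p.2 < T}) := by
    rw [hK]
    apply closure_minimal _ isClosed_closure
    intro p hp
    obtain ⟨h1, h2, h3, h4⟩ := hp
    rcases lt_or_eq_of_le h4 with h | h
    · exact subset_closure ⟨⟨h1, h2, h3, h4⟩, h⟩
    · have hsc : ContinuousWithinAt s (Set.Icc 0 T) T := hscont T ⟨hT.le, le_rfl⟩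
      have hev : ∀ᶠ τ in 𝓝[Set.Icc (0:ℝ) T] T, p.1 < s τ :=
        hsc.eventually (eventually_gt_nhds (h ▸ h2))
      obtain ⟨δ, hδ0, hδ⟩ := Metric.mem_nhdsWithin_iff.mp hev
      set δ' := min δ T with hδ'
      have hδ'0 : 0 < δ' := lt_min hδ0 hT
      have hseg : ({p.1} : Set ℝ) ×ˢ Set.Ioo (T - δ') T ⊆ D ∩ {p : ℝ × ℝ | p.2 < T} := by
        rintro ⟨x, t⟩ ⟨hx, ht⟩
        simp only [Set.mem_singleton_iff] at hx
        subst hx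
        have ht0 : 0 < t := by
          have : δ' ≤ T := min_le_right _ _
          linarith [ht.1]
        have hdist : dist t T < δ := by
          rw [Real.dist_eq, abs_lt]
          constructor
          · have : δ' ≤ δ := min_le_left _ _
            linarith [ht.1]
          · linarith [ht.2]
        have hst : p.1 < s t := hδ ⟨Metric.mem_ball.mpr hdist, ⟨ht0.le, ht.2.le⟩⟩
        exact ⟨⟨h1, hst, ht0, ht.2.le⟩, ht.2⟩
      have hmem : (p.1, T) ∈ closure (({p.1} : Set ℝ) ×ˢ Set.Ioo (T - δ') T) := by
        rw [closure_prod_eq, closure_singleton, closure_Ioo (by linarith : T - δ' ≠ T)]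
        exact ⟨rfl, ⟨by linarith, le_rfl⟩⟩
      have : p = (p.1, T) := by
        rw [← h]
      exact this ▸ closure_mono hseg hmem
  intro p hp
  have hpcl : p ∈ closure (D ∩ {p : ℝ × ℝ | p.2 < T}) := hD'cl hp
  have hnn : ∀ z ∈ D ∩ {p : ℝ × ℝ | p.2 < T}, 0 ≤ v z.1 z.2 := by
    intro z hz
    by_contra hneg
    push_neg at hneg
    obtain ⟨⟨hz1, hz2, hz3, hz4⟩, hz5⟩ := hz
    set E := a * Real.exp (a * z.1) with hE
    have hEpos : 0 < E := mul_pos ha (Real.exp_pos _)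
    have hvz : 0 < -v z.1 z.2 := neg_pos.mpr hneg
    set ε := min (a / (4 * T)) (E * (-v z.1 z.2) / (2 * T)) with hε
    have hε0 : 0 < ε := lt_min (by positivity) (by positivity)
    have hεa : ε < a / (2 * T) := by
      apply lt_of_le_of_lt (min_le_left _ _)
      apply div_lt_div_of_pos_left ha (by positivity) (by linarith)
    have hkey := key z.2 hz3 hz5 ε hε0 hεa z (subset_closure ⟨hz1, hz2, hz3, hz4⟩) le_rfl
    have h1 : ε * z.2 ≤ ε * T := by nlinarith
    have h2 : ε ≤ E * (-v z.1 z.2) / (2 * T) := min_le_right _ _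
    have h3 : ε * T ≤ E * (-v z.1 z.2) / 2 := by
      have : ε * T ≤ E * (-v z.1 z.2) / (2 * T) * T := by nlinarith
      have heq : E * (-v z.1 z.2) / (2 * T) * T = E * (-v z.1 z.2) / 2 := by
        field_simp
      linarith
    nlinarith [hkey]
  have hvc : ContinuousWithinAt (fun p : ℝ × ℝ => v p.1 p.2) K p := hvcont p hp
  have hne : (𝓝[D ∩ {p : ℝ × ℝ | p.2 < T}] p).NeBot := mem_closure_iff_nhdsWithin_neBot.mp hpcl
  have htd : Filter.Tendsto (fun z : ℝ × ℝ => v z.1 z.2) (𝓝[D ∩ {p : ℝ × ℝ | p.2 < T}] p)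
      (𝓝 (v p.1 p.2)) :=
    hvc.mono_left (nhdsWithin_mono _ (fun z hz => subset_closure hz.1))
  refine ge_of_tendsto htd ?_
  filter_upwards [eventually_mem_nhdsWithin] with z hz using hnn z hz
end

section
/- There exists a finite constant C such that for every square-summable sequence of real numbers (b_k)_{k≥1}: ∑_{k=1}^∞ ∑_{j≥1, j−k odd} |b_k|·|b_j| / |k² − j²| ≤ C·∑_{k=1}^∞ b_k². -/
open ENNReal

/-- There is a universal constant C such that for every square-summable real
sequence (b_k)_{k≥1}, the double sum ∑_{k≥1} ∑_{j≥1, j−k odd} |b_k||b_j|/|k²−j²|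
is at most C ∑_{k≥1} b_k². (Stated in ℝ≥0∞ so that the double sum is always
well defined; indices are shifted so that k+1, j+1 range over {1,2,…}.) -/
theorem stmt19 :
    ∃ C : ℝ, ∀ b : ℕ → ℝ, Summable (fun k => (b (k + 1)) ^ 2) →
      ∑' (k : ℕ), ∑' (j : ℕ),
          (if Odd ((j : ℤ) - (k : ℤ)) then
            ENNReal.ofReal (|b (k + 1)| * |b (j + 1)|
              / |((k : ℝ) + 1) ^ 2 - ((j : ℝ) + 1) ^ 2|)
          else 0)
        ≤ ENNReal.ofReal (C * ∑' (k : ℕ), (b (k + 1)) ^ 2) := by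
  set S : ℝ≥0∞ := ∑' (n : ℤ), ENNReal.ofReal (1 / (n : ℝ) ^ 2) with hSdef
  have hsum : Summable (fun n : ℤ => 1 / (n : ℝ) ^ 2) :=
    Real.summable_one_div_int_pow.mpr one_lt_two
  have hSfin : S ≠ ∞ := by
    rw [hSdef, ← ENNReal.ofReal_tsum_of_nonneg (fun n => by positivity) hsum]
    exact ENNReal.ofReal_ne_top
  refine ⟨S.toReal, fun b hb => ?_⟩
  set T : ℝ := ∑' (k : ℕ), (b (k + 1)) ^ 2 with hTdef
  have hT : 0 ≤ T := tsum_nonneg fun k => sq_nonneg _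
  set f : ℕ → ℕ → ℝ≥0∞ := fun k j =>
    ENNReal.ofReal ((b (k + 1)) ^ 2 / 2) *
      ENNReal.ofReal (1 / ((k : ℝ) - (j : ℝ)) ^ 2) with hfdef
  have key : ∀ k j : ℕ,
      (if Odd ((j : ℤ) - (k : ℤ)) then
        ENNReal.ofReal (|b (k + 1)| * |b (j + 1)|
          / |((k : ℝ) + 1) ^ 2 - ((j : ℝ) + 1) ^ 2|)
      else 0) ≤ f k j + f j k := by
    intro k j
    split_ifs with h
    · have hkj : (k : ℤ) ≠ (j : ℤ) := by
        intro he; rw [he, sub_self] at h; exact (Int.not_odd_iff_even.mpr Even.zero) h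
      have hkjR : ((k : ℝ) - (j : ℝ)) ≠ 0 := by
        intro he
        exact hkj (by exact_mod_cast sub_eq_zero.mp he)
      have hd2 : (0 : ℝ) < ((k : ℝ) - (j : ℝ)) ^ 2 := by positivity
      have hD : ((k : ℝ) - (j : ℝ)) ^ 2 ≤ |((k : ℝ) + 1) ^ 2 - ((j : ℝ) + 1) ^ 2| := by
        have h1 : ((k : ℝ) + 1) ^ 2 - ((j : ℝ) + 1) ^ 2
            = ((k : ℝ) - (j : ℝ)) * ((k : ℝ) + (j : ℝ) + 2) := by ring
        rw [h1, abs_mul, abs_of_nonneg (by positivity : (0:ℝ) ≤ (k : ℝ) + (j : ℝ) + 2),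
          sq, ← abs_mul_abs_self]
        have hk0 : (0:ℝ) ≤ (k:ℝ) := Nat.cast_nonneg k
        have hj0 : (0:ℝ) ≤ (j:ℝ) := Nat.cast_nonneg j
        have : |(k : ℝ) - (j : ℝ)| ≤ (k : ℝ) + (j : ℝ) + 2 := by
          rcases abs_cases ((k : ℝ) - (j : ℝ)) with ⟨he, _⟩ | ⟨he, _⟩ <;> rw [he] <;> linarith
        exact mul_le_mul_of_nonneg_left this (abs_nonneg _)
      have hreal : |b (k + 1)| * |b (j + 1)| / |((k : ℝ) + 1) ^ 2 - ((j : ℝ) + 1) ^ 2|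
          ≤ (b (k + 1)) ^ 2 / 2 * (1 / ((k : ℝ) - (j : ℝ)) ^ 2)
            + (b (j + 1)) ^ 2 / 2 * (1 / ((j : ℝ) - (k : ℝ)) ^ 2) := by
        have hsq : ((j : ℝ) - (k : ℝ)) ^ 2 = ((k : ℝ) - (j : ℝ)) ^ 2 := by ring
        rw [hsq]
        have h2 : |b (k + 1)| * |b (j + 1)| / |((k : ℝ) + 1) ^ 2 - ((j : ℝ) + 1) ^ 2|
            ≤ |b (k + 1)| * |b (j + 1)| / (((k : ℝ) - (j : ℝ)) ^ 2) :=
          div_le_div_of_nonneg_left (by positivity) hd2 hD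
        refine h2.trans ?_
        rw [div_eq_mul_one_div]
        have hab : |b (k + 1)| * |b (j + 1)|
            ≤ (b (k + 1)) ^ 2 / 2 + (b (j + 1)) ^ 2 / 2 := by
          nlinarith [sq_nonneg (|b (k + 1)| - |b (j + 1)|), sq_abs (b (k+1)), sq_abs (b (j+1))]
        nlinarith [one_div_pos.mpr hd2, mul_le_mul_of_nonneg_right hab
          (le_of_lt (one_div_pos.mpr hd2))]
      calc ENNReal.ofReal (|b (k + 1)| * |b (j + 1)|
              / |((k : ℝ) + 1) ^ 2 - ((j : ℝ) + 1) ^ 2|)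
          ≤ ENNReal.ofReal ((b (k + 1)) ^ 2 / 2 * (1 / ((k : ℝ) - (j : ℝ)) ^ 2)
            + (b (j + 1)) ^ 2 / 2 * (1 / ((j : ℝ) - (k : ℝ)) ^ 2)) :=
            ENNReal.ofReal_le_ofReal hreal
        _ ≤ _ := by
            refine (ENNReal.ofReal_add_le).trans ?_
            rw [hfdef]
            simp only [ENNReal.ofReal_mul (by positivity : (0:ℝ) ≤ (b (k+1))^2/2),
              ENNReal.ofReal_mul (by positivity : (0:ℝ) ≤ (b (j+1))^2/2)]
            exact le_rfl
    · exact zero_le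
  have hrow : ∀ k : ℕ, ∑' (j : ℕ), f k j ≤ ENNReal.ofReal ((b (k + 1)) ^ 2 / 2) * S := by
    intro k
    rw [hfdef]
    simp only
    rw [ENNReal.tsum_mul_left]
    refine mul_le_mul_right ?_ _
    have hinj : Function.Injective (fun j : ℕ => (k : ℤ) - (j : ℤ)) := by
      intro a c h; simpa using h
    have := tsum_comp_le_tsum_of_injective hinj (fun n : ℤ => ENNReal.ofReal (1 / (n : ℝ) ^ 2))
    refine le_trans (le_of_eq ?_) this
    congr 1
    funext j
    push_cast
    ring_nf
  calc ∑' (k : ℕ), ∑' (j : ℕ),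
        (if Odd ((j : ℤ) - (k : ℤ)) then
          ENNReal.ofReal (|b (k + 1)| * |b (j + 1)|
            / |((k : ℝ) + 1) ^ 2 - ((j : ℝ) + 1) ^ 2|)
        else 0)
      ≤ ∑' (k : ℕ), ∑' (j : ℕ), (f k j + f j k) :=
        ENNReal.tsum_le_tsum fun k => ENNReal.tsum_le_tsum fun j => key k j
    _ = (∑' (k : ℕ), ∑' (j : ℕ), f k j) + ∑' (k : ℕ), ∑' (j : ℕ), f j k := by
        simp [ENNReal.tsum_add]
    _ = 2 * ∑' (k : ℕ), ∑' (j : ℕ), f k j := by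
        rw [ENNReal.tsum_comm (f := fun k j => f j k)]
        ring
    _ ≤ 2 * ∑' (k : ℕ), ENNReal.ofReal ((b (k + 1)) ^ 2 / 2) * S :=
        mul_le_mul_right (ENNReal.tsum_le_tsum hrow) _
    _ = 2 * (ENNReal.ofReal (T / 2) * S) := by
        rw [ENNReal.tsum_mul_right]
        congr 2
        rw [← ENNReal.ofReal_tsum_of_nonneg (fun k => by positivity)
          (hb.div_const 2)]
        congr 1
        rw [hTdef, tsum_div_const]
    _ = ENNReal.ofReal T * S := by
        rw [← mul_assoc, show (2 : ℝ≥0∞) = ENNReal.ofReal 2 by simp,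
          ← ENNReal.ofReal_mul (by norm_num)]
        congr 2
        ring
    _ ≤ ENNReal.ofReal (S.toReal * T) := by
        rw [ENNReal.ofReal_mul (ENNReal.toReal_nonneg), ENNReal.ofReal_toReal hSfin,
          mul_comm]
end
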